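/- For fixed real k > -1/2, as N → ∞ the product M_N(2k) = ∏_{j=1}^{N} Γ(j)Γ(j+2k)/Γ(j+k)² satisfies M_N(2k) ~ (G(k+1)²/G(2k+1)) N^{k²}, i.e. M_N(2k) N^{-k²} → G(k+1)²/G(2k+1), where G is the Barnes G-function. -/

import Mathlib

open Finset Nat Filter Topology

/-- The Barnes G-function for real arguments, via its Weierstrass product:
`G(1+z) = (2π)^{z/2} exp(−(z+z²(1+γ))/2) ∏_{n=1}^∞ (1+z/n)^n exp(z²/(2n) − z)`,
where `γ` is the Euler–Mascheroni constant. -/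
noncomputable def BarnesG (x : ℝ) : ℝ :=
  (2 * Real.pi) ^ ((x - 1) / 2) *
    Real.exp (-((x - 1) + (x - 1) ^ 2 * (1 + Real.eulerMascheroniConstant)) / 2) *
    ∏' n : ℕ,
      (1 + (x - 1) / (n + 1)) ^ (n + 1) * Real.exp ((x - 1) ^ 2 / (2 * (n + 1)) - (x - 1))

namespace KSaux

open Real

lemma one_add_div_pos {x : ℝ} (hx : -1 < x) (n : ℕ) : 0 < 1 + x / (n + 1) := by
  have h1 : (0:ℝ) < (n:ℝ) + 1 := by positivity
  have h2 : (0:ℝ) < (n:ℝ) + 1 + x := by nlinarith [Nat.cast_nonneg (α := ℝ) n]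
  have h3 : 1 + x/((n:ℝ)+1) = ((n:ℝ)+1+x)/((n:ℝ)+1) := by field_simp
  rw [h3]; exact div_pos h2 h1

noncomputable def am (k : ℝ) (n : ℕ) : ℝ := (1 + k / (n + 1)) ^ 2 / (1 + 2 * k / (n + 1))

noncomputable def bb (x : ℝ) (n : ℕ) : ℝ :=
  (1 + x / (n + 1)) ^ (n + 1) * Real.exp (x ^ 2 / (2 * (n + 1)) - x)

noncomputable def ll (k : ℝ) (n : ℕ) : ℝ := Real.log (am k n)

lemma am_pos {k : ℝ} (hk : -1/2 < k) (n : ℕ) : 0 < am k n :=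
  div_pos (pow_pos (one_add_div_pos (by linarith) n) 2)
    (by simpa [mul_div_assoc] using one_add_div_pos (x := 2*k) (by linarith) n)

lemma bb_pos {x : ℝ} (hx : -1 < x) (n : ℕ) : 0 < bb x n :=
  mul_pos (pow_pos (one_add_div_pos hx n) _) (Real.exp_pos _)

lemma am_eq {k : ℝ} (hk : -1/2 < k) (n : ℕ) :
    am k n = ((n:ℝ)+1+k)^2 / (((n:ℝ)+1)*((n:ℝ)+1+2*k)) := by
  have h1 : (0:ℝ) < (n:ℝ) + 1 := by positivity
  have h2 : (0:ℝ) < (n:ℝ) + 1 + 2*k := by nlinarith [Nat.cast_nonneg (α := ℝ) n]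
  have h3 : 1 + 2 * k/((n:ℝ)+1) > 0 := by
    simpa [mul_div_assoc] using one_add_div_pos (x := 2*k) (by linarith) n
  rw [am]
  field_simp

lemma log_taylor2 {u : ℝ} (hu : |u| ≤ 1/2) : |Real.log (1+u) - (u - u^2/2)| ≤ 2 * |u|^3 := by
  have h1 : |(-u)| < 1 := by rw [abs_neg]; linarith
  have h2 := Real.abs_log_sub_add_sum_range_le h1 2
  simp only [Finset.sum_range_succ, Finset.sum_range_zero] at h2
  have e1 : (0:ℝ) + (-u)^(0+1)/((0:ℕ)+1) + (-u)^(1+1)/((1:ℕ)+1) + Real.log (1 - -u)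
      = Real.log (1+u) - (u - u^2/2) := by push_cast; ring_nf
  rw [e1] at h2
  have e2 : |(-u)| ^ (2+1) / (1 - |(-u)|) ≤ 2 * |u|^3 := by
    rw [abs_neg]
    rw [div_le_iff₀ (by linarith)]
    have h3 : (0:ℝ) ≤ |u|^3 := by positivity
    have h4 : |u| ^ (2+1) = |u|^3 := by norm_num
    rw [h4]
    nlinarith [mul_le_mul_of_nonneg_left hu h3]
  linarith

lemma ll_bound {k : ℝ} {n : ℕ} (hn : 4*(1+|k|) ≤ (n:ℝ)+1) :
    |ll k n - k^2/((n:ℝ)+1)^2| ≤ 20*|k|^3/((n:ℝ)+1)^3 := by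
  have hN : (0:ℝ) < (n:ℝ)+1 := by positivity
  set u := k/((n:ℝ)+1) with hu_def
  have hu : |u| ≤ 1/4 := by
    rw [hu_def, abs_div, abs_of_pos hN, div_le_iff₀ hN]
    nlinarith [abs_nonneg k]
  obtain ⟨hul, hur⟩ := abs_le.mp hu
  have hp1 : (0:ℝ) < 1 + u := by linarith
  have hp2 : (0:ℝ) < 1 + 2*u := by linarith
  have ham : am k n = (1+u)^2/(1+2*u) := by rw [am, mul_div_assoc]
  have hlog : ll k n = 2*Real.log (1+u) - Real.log (1+2*u) := by
    rw [ll, ham, Real.log_div (by positivity) hp2.ne', Real.log_pow]; push_cast; ring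
  have hu2 : k^2/((n:ℝ)+1)^2 = u^2 := by rw [hu_def, div_pow]
  have key : ll k n - k^2/((n:ℝ)+1)^2
      = 2*(Real.log (1+u) - (u - u^2/2)) - (Real.log (1+2*u) - (2*u - (2*u)^2/2)) := by
    rw [hlog, hu2]; ring
  have h1 := log_taylor2 (u := u) (le_trans hu (by norm_num))
  have h2 := log_taylor2 (u := 2*u) (by rw [abs_mul, abs_two]; linarith [abs_le.mpr ⟨hul, hur⟩])
  have h3 : |2*u| ^ 3 = 8 * |u|^3 := by rw [abs_mul, abs_two]; ring
  have habs : |u|^3 = |k|^3/((n:ℝ)+1)^3 := by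
    rw [hu_def, abs_div, abs_of_pos hN, div_pow]
  calc |ll k n - k^2/((n:ℝ)+1)^2|
      ≤ |2*(Real.log (1+u) - (u - u^2/2))| + |Real.log (1+2*u) - (2*u - (2*u)^2/2)| := by
        rw [key]; exact abs_sub _ _
    _ ≤ 2*(2*|u|^3) + 2*|2*u|^3 := by
        rw [abs_mul, abs_two]; gcongr
    _ = 20 * |k|^3/((n:ℝ)+1)^3 := by
        rw [h3, show (20:ℝ) * |k|^3/((n:ℝ)+1)^3 = 20*(|k|^3/((n:ℝ)+1)^3) from by ring, ← habs]
        ring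

lemma summable_shifted_sq (c : ℝ) : Summable (fun n : ℕ => c / ((n:ℝ)+1)^2) := by
  have h := (Real.summable_one_div_nat_pow (p := 2)).2 (by norm_num)
  have h2 := (_root_.summable_nat_add_iff 1).2 h
  have h3 := h2.mul_left c
  refine h3.congr fun n => ?_
  push_cast
  ring

lemma eventually_bound {k : ℝ} : ∀ᶠ n : ℕ in atTop, 4*(1+|k|) ≤ (n:ℝ)+1 := by
  have := tendsto_natCast_atTop_atTop (R := ℝ)
  filter_upwards [this.eventually_ge_atTop (4*(1+|k|))] with n hn
  linarith

lemma summable_ll (k : ℝ) : Summable (ll k) := by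
  refine Summable.of_norm_bounded_eventually_nat
    (g := fun n => (k^2 + 20*|k|^3) / ((n:ℝ)+1)^2) (summable_shifted_sq _) ?_
  filter_upwards [eventually_bound (k := k)] with n hn
  have hN : (0:ℝ) < (n:ℝ)+1 := by positivity
  have hb := ll_bound (k := k) hn
  have h2 : |ll k n| ≤ k^2/((n:ℝ)+1)^2 + 20*|k|^3/((n:ℝ)+1)^3 := by
    have h4 : |k^2/((n:ℝ)+1)^2| = k^2/((n:ℝ)+1)^2 := abs_of_nonneg (by positivity)
    calc |ll k n| = |ll k n - k^2/((n:ℝ)+1)^2 + k^2/((n:ℝ)+1)^2| := by ring_nf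
      _ ≤ |ll k n - k^2/((n:ℝ)+1)^2| + |k^2/((n:ℝ)+1)^2| := abs_add_le _ _
      _ ≤ 20*|k|^3/((n:ℝ)+1)^3 + k^2/((n:ℝ)+1)^2 := by rw [h4]; gcongr
      _ = k^2/((n:ℝ)+1)^2 + 20*|k|^3/((n:ℝ)+1)^3 := by ring
  rw [Real.norm_eq_abs]
  calc |ll k n| ≤ k^2/((n:ℝ)+1)^2 + 20*|k|^3/((n:ℝ)+1)^3 := h2
    _ ≤ k^2/((n:ℝ)+1)^2 + 20*|k|^3/((n:ℝ)+1)^2 := by gcongr <;> nlinarith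
    _ = (k^2 + 20*|k|^3) / ((n:ℝ)+1)^2 := by ring

lemma log_bb_eq {x : ℝ} (hx : -1 < x) (n : ℕ) :
    Real.log (bb x n)
      = ((n:ℝ)+1) * (Real.log (1 + x/((n:ℝ)+1)) - (x/((n:ℝ)+1) - (x/((n:ℝ)+1))^2/2)) := by
  have hN : (0:ℝ) < (n:ℝ)+1 := by positivity
  have hp := one_add_div_pos hx n
  rw [bb, Real.log_mul (by positivity) (Real.exp_ne_zero _), Real.log_pow, Real.log_exp]
  push_cast
  field_simp
  ring

lemma summable_log_bb {x : ℝ} (hx : -1 < x) : Summable (fun n => Real.log (bb x n)) := by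
  refine Summable.of_norm_bounded_eventually_nat
    (g := fun n => (2*|x|^3) / ((n:ℝ)+1)^2) (summable_shifted_sq _) ?_
  filter_upwards [eventually_bound (k := x)] with n hn
  have hN : (0:ℝ) < (n:ℝ)+1 := by positivity
  have hu : |x/((n:ℝ)+1)| ≤ 1/2 := by
    rw [abs_div, abs_of_pos hN, div_le_iff₀ hN]
    nlinarith [abs_nonneg x]
  have h1 := log_taylor2 hu
  rw [Real.norm_eq_abs, log_bb_eq hx n, abs_mul, abs_of_pos hN]
  have h2 : |x/((n:ℝ)+1)|^3 = |x|^3/((n:ℝ)+1)^3 := by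
    rw [abs_div, abs_of_pos hN, div_pow]
  calc ((n:ℝ)+1) * |Real.log (1 + x/((n:ℝ)+1)) - (x/((n:ℝ)+1) - (x/((n:ℝ)+1))^2/2)|
      ≤ ((n:ℝ)+1) * (2 * |x/((n:ℝ)+1)|^3) := by gcongr
    _ = ((n:ℝ)+1) * (2 * (|x|^3/((n:ℝ)+1)^3)) := by rw [h2]
    _ = (2*|x|^3) / ((n:ℝ)+1)^2 := by field_simp

lemma hasProd_exp_tsum {f : ℕ → ℝ} (hf : ∀ n, 0 < f n) (h : Summable fun n => Real.log (f n)) :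
    HasProd f (Real.exp (∑' n, Real.log (f n))) := by
  have h2 := h.hasSum.rexp
  have h3 : (rexp ∘ fun n => Real.log (f n)) = f := funext fun n => Real.exp_log (hf n)
  rwa [h3] at h2

lemma prod_am_eq {k : ℝ} (hk : -1/2 < k) {n : ℕ} (hn : 0 < n) :
    ∏ j ∈ range (n+1), am k j
      = Real.GammaSeq (1+2*k) n / (Real.GammaSeq (1+k) n)^2 * ((n:ℝ)/((n:ℝ)+1)) := by
  have hn0 : (0:ℝ) < n := by exact_mod_cast hn
  have hk1 : (0:ℝ) < 1 + k := by linarith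
  have hk2 : (0:ℝ) < 1 + 2*k := by linarith
  have hPk : (0:ℝ) < ∏ j ∈ range (n+1), (1+k+(j:ℝ)) :=
    Finset.prod_pos fun j _ => by positivity
  have hP2k : (0:ℝ) < ∏ j ∈ range (n+1), (1+2*k+(j:ℝ)) :=
    Finset.prod_pos fun j _ => by positivity
  have hfac : (0:ℝ) < (n ! : ℝ) := by exact_mod_cast Nat.factorial_pos n
  have hrp1 : (0:ℝ) < (n:ℝ)^((1:ℝ)+k) := Real.rpow_pos_of_pos hn0 _
  have hP1 : ∏ j ∈ range (n+1), ((j:ℝ)+1) = (((n+1)! : ℕ):ℝ) := by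
    rw [← Finset.prod_range_add_one_eq_factorial (n+1)]
    push_cast
    ring
  have hL : ∏ j ∈ range (n+1), am k j
      = (∏ j ∈ range (n+1), (1+k+(j:ℝ)))^2
        / ((((n+1)! : ℕ):ℝ) * ∏ j ∈ range (n+1), (1+2*k+(j:ℝ))) := by
    rw [← hP1, ← Finset.prod_pow, ← Finset.prod_mul_distrib, ← Finset.prod_div_distrib]
    refine Finset.prod_congr rfl fun j _ => ?_
    rw [am_eq hk j]
    ring_nf
  have hB : (n:ℝ)^((1:ℝ)+2*k) = (n:ℝ)^((1:ℝ)+k) * (n:ℝ)^((1:ℝ)+k) / (n:ℝ) := by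
    rw [← Real.rpow_add hn0]
    rw [eq_div_iff hn0.ne', ← Real.rpow_add_one hn0.ne']
    congr 1
    ring
  rw [hL, Real.GammaSeq, Real.GammaSeq, hB]
  have hfacs : (((n+1)! : ℕ):ℝ) = ((n:ℝ)+1) * (n ! : ℝ) := by
    push_cast [Nat.factorial_succ]; ring
  rw [hfacs]
  field_simp

lemma tendsto_prod_am {k : ℝ} (hk : -1/2 < k) :
    Tendsto (fun N => ∏ n ∈ range N, am k n) atTop
      (𝓝 (Real.Gamma (1+2*k) / Real.Gamma (1+k)^2)) := by
  have hk1 : (0:ℝ) < 1 + k := by linarith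
  have hG : Real.Gamma (1+k) ^ 2 ≠ 0 := pow_ne_zero _ (Real.Gamma_pos_of_pos hk1).ne'
  have h1 : Tendsto (fun n : ℕ =>
      Real.GammaSeq (1+2*k) n / (Real.GammaSeq (1+k) n)^2 * ((n:ℝ)/((n:ℝ)+1))) atTop
      (𝓝 (Real.Gamma (1+2*k) / Real.Gamma (1+k)^2 * 1)) := by
    refine Tendsto.mul ?_ ?_
    · exact (Real.GammaSeq_tendsto_Gamma _).div ((Real.GammaSeq_tendsto_Gamma _).pow 2) hG
    · simpa using tendsto_natCast_div_add_atTop (𝕜 := ℝ) 1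
  rw [mul_one] at h1
  have h2 : Tendsto (fun n : ℕ => ∏ j ∈ range (n+1), am k j) atTop
      (𝓝 (Real.Gamma (1+2*k) / Real.Gamma (1+k)^2)) := by
    refine h1.congr' ?_
    filter_upwards [eventually_gt_atTop 0] with n hn
    exact (prod_am_eq hk hn).symm
  exact (tendsto_add_atTop_iff_nat 1).mp h2

lemma C_eq {k : ℝ} (hk : -1/2 < k) :
    Real.Gamma (1+2*k) / Real.Gamma (1+k)^2 = Real.exp (∑' n, ll k n) :=
  tendsto_nhds_unique (tendsto_prod_am hk)
    ((hasProd_exp_tsum (am_pos hk) (summable_ll k)).tendsto_prod_nat)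

lemma hasSum_tele {c : ℝ} (hc : 0 < c) :
    HasSum (fun i : ℕ => 1/((c+i)*(c+i+1))) (1/c) := by
  have hnn : ∀ i : ℕ, 0 ≤ 1/((c+i)*(c+i+1)) := by
    intro i
    have h1 : (0:ℝ) < c + i := by positivity
    positivity
  rw [hasSum_iff_tendsto_nat_of_nonneg hnn]
  have hsum : ∀ n : ℕ, ∑ i ∈ range n, 1/((c+i)*(c+i+1)) = 1/c - 1/(c+n) := by
    intro n
    have := Finset.sum_range_sub' (f := fun i : ℕ => 1/(c+i)) n
    push_cast at this
    calc ∑ i ∈ range n, 1/((c+i)*(c+i+1))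
        = ∑ x ∈ range n, (1/(c+x) - 1/(c+((x:ℝ)+1))) := by
          refine Finset.sum_congr rfl fun i _ => ?_
          have h1 : (0:ℝ) < c + i := by positivity
          have h2 : (0:ℝ) < c + i + 1 := by positivity
          rw [show c + ((i:ℝ)+1) = c + (i:ℝ) + 1 from by ring]
          rw [div_sub_div _ _ h1.ne' h2.ne']
          congr 1
          ring
      _ = 1/(c+0) - 1/(c+(n:ℝ)) := this
      _ = 1/c - 1/(c+(n:ℝ)) := by norm_num
  simp only [hsum]
  have h3 : Tendsto (fun n : ℕ => 1/(c+n)) atTop (𝓝 0) := by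
    simp only [one_div]
    apply Tendsto.comp tendsto_inv_atTop_zero
    apply tendsto_atTop_add_const_left
    exact tendsto_natCast_atTop_atTop
  simpa using (tendsto_const_nhds (x := 1/c)).sub h3

lemma summable_sq {N : ℕ} (hN : 0 < N) :
    Summable (fun i : ℕ => 1/(((N:ℝ)+i+1)^2)) := by
  have hc : (0:ℝ) < N := by exact_mod_cast hN
  refine Summable.of_nonneg_of_le (fun i => by positivity) (fun i => ?_)
    (hasSum_tele hc).summable
  have h1 : (0:ℝ) < (N:ℝ)+i := by positivity
  exact one_div_le_one_div_of_le (by positivity) (by nlinarith)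

lemma sq_tsum_le {N : ℕ} (hN : 0 < N) : ∑' i : ℕ, 1/(((N:ℝ)+i+1)^2) ≤ 1/(N:ℝ) := by
  have hc : (0:ℝ) < N := by exact_mod_cast hN
  rw [← (hasSum_tele hc).tsum_eq]
  refine Summable.tsum_le_tsum (fun i => ?_) (summable_sq hN) (hasSum_tele hc).summable
  have h1 : (0:ℝ) < (N:ℝ)+i := by positivity
  exact one_div_le_one_div_of_le (by positivity) (by nlinarith)

lemma sq_tsum_ge {N : ℕ} (hN : 0 < N) : 1/((N:ℝ)+1) ≤ ∑' i : ℕ, 1/(((N:ℝ)+i+1)^2) := by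
  have hc : (0:ℝ) < (N:ℝ)+1 := by positivity
  rw [← (hasSum_tele hc).tsum_eq]
  refine Summable.tsum_le_tsum (fun i => ?_) (hasSum_tele hc).summable (summable_sq hN)
  have h1 : (0:ℝ) < (N:ℝ)+1+i := by positivity
  exact one_div_le_one_div_of_le (by positivity) (by nlinarith)

lemma summable_cube {N : ℕ} (hN : 0 < N) :
    Summable (fun i : ℕ => 1/(((N:ℝ)+i+1)^3)) := by
  refine Summable.of_nonneg_of_le (fun i => by positivity) (fun i => ?_) (summable_sq hN)
  have h1 : (0:ℝ) < (N:ℝ)+i+1 := by positivity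
  apply one_div_le_one_div_of_le (by positivity)
  nlinarith

lemma cube_tsum_le {N : ℕ} (hN : 0 < N) :
    ∑' i : ℕ, 1/(((N:ℝ)+i+1)^3) ≤ 1/((N:ℝ)^2) := by
  have hc : (0:ℝ) < N := by exact_mod_cast hN
  have h1 : (1:ℝ) ≤ (N:ℝ) := by exact_mod_cast hN
  have step1 : ∑' i : ℕ, 1/(((N:ℝ)+i+1)^3)
      ≤ ∑' i : ℕ, (1/((N:ℝ)+1)) * (1/(((N:ℝ)+i+1)^2)) := by
    refine Summable.tsum_le_tsum (fun i => ?_) (summable_cube hN) ((summable_sq hN).mul_left _)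
    have h2 : (0:ℝ) < (N:ℝ)+i+1 := by positivity
    rw [_root_.div_mul_div_comm, one_mul]
    apply one_div_le_one_div_of_le (by positivity)
    nlinarith
  rw [tsum_mul_left] at step1
  calc ∑' i : ℕ, 1/(((N:ℝ)+i+1)^3) ≤ (1/((N:ℝ)+1)) * ∑' i : ℕ, 1/(((N:ℝ)+i+1)^2) := step1
    _ ≤ (1/((N:ℝ)+1)) * (1/(N:ℝ)) := by
        apply mul_le_mul_of_nonneg_left (sq_tsum_le hN) (by positivity)
    _ ≤ 1/((N:ℝ)^2) := by
        rw [_root_.div_mul_div_comm, one_mul]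
        apply one_div_le_one_div_of_le (by positivity)
        nlinarith

lemma summable_ll_shift (k : ℝ) (N : ℕ) : Summable (fun i : ℕ => ll k (N + i)) := by
  have := (_root_.summable_nat_add_iff (f := ll k) N).2 (summable_ll k)
  exact this.congr fun i => by rw [Nat.add_comm]

lemma tendsto_tail (k : ℝ) :
    Tendsto (fun N : ℕ => (N:ℝ) * ∑' i : ℕ, ll k (N + i)) atTop (𝓝 (k^2)) := by
  set c : ℝ := k^2 + 20*|k|^3 with hc_def
  have key : ∀ᶠ N : ℕ in atTop,
      ‖(N:ℝ) * (∑' i : ℕ, ll k (N + i)) - k^2‖ ≤ c / N := by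
    filter_upwards [eventually_gt_atTop 0,
      (tendsto_natCast_atTop_atTop (R := ℝ)).eventually_ge_atTop (4*(1+|k|))] with N hN0 hN4
    have hc : (0:ℝ) < N := by exact_mod_cast hN0
    set D : ℕ → ℝ := fun i => ll k (N + i) - k^2/(((N:ℝ)+i+1)^2) with hD_def
    have hDb : ∀ i : ℕ, |D i| ≤ 20*|k|^3/(((N:ℝ)+i+1)^3) := by
      intro i
      have hcast : ((N+i : ℕ):ℝ) = (N:ℝ)+i := by push_cast; ring
      have hcond : 4*(1+|k|) ≤ ((N+i : ℕ):ℝ)+1 := by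
        rw [hcast]
        have : (0:ℝ) ≤ i := Nat.cast_nonneg i
        linarith
      have := ll_bound (k := k) hcond
      rw [hcast] at this
      exact this
    have hsum1 : Summable (fun i : ℕ => ll k (N + i)) := summable_ll_shift k N
    have hsum2 : Summable (fun i : ℕ => k^2/(((N:ℝ)+i+1)^2)) := by
      have := (summable_sq hN0).mul_left (k^2)
      exact this.congr fun i => by rw [mul_one_div]
    have hsumD : Summable D := hsum1.sub hsum2
    have hsum3 : Summable (fun i : ℕ => 20*|k|^3/(((N:ℝ)+i+1)^3)) := by
      have := (summable_cube hN0).mul_left (20*|k|^3)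
      exact this.congr fun i => by rw [mul_one_div]
    have hsumabsD : Summable (fun i => |D i|) :=
      Summable.of_nonneg_of_le (fun i => abs_nonneg _) hDb hsum3
    set S : ℝ := ∑' i : ℕ, 1/(((N:ℝ)+i+1)^2) with hS_def
    have hsplit : ∑' i : ℕ, ll k (N + i) = (∑' i, D i) + k^2 * S := by
      have e1 : ∑' i : ℕ, ll k (N + i) = ∑' i : ℕ, (D i + k^2/(((N:ℝ)+i+1)^2)) := by
        congr 1; funext i; simp only [hD_def]; ring
      rw [e1, Summable.tsum_add hsumD hsum2]
      congr 1
      rw [← tsum_mul_left]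
      congr 1; funext i; rw [mul_one_div]
    have hDtsum : |∑' i, D i| ≤ 20*|k|^3/((N:ℝ)^2) := by
      calc |∑' i, D i| ≤ ∑' i, |D i| := by
            simpa [Real.norm_eq_abs] using norm_tsum_le_tsum_norm (f := D)
              (by simpa [Real.norm_eq_abs] using hsumabsD)
        _ ≤ ∑' i : ℕ, 20*|k|^3/(((N:ℝ)+i+1)^3) := Summable.tsum_le_tsum hDb hsumabsD hsum3
        _ = 20*|k|^3 * ∑' i : ℕ, 1/(((N:ℝ)+i+1)^3) := by
            rw [← tsum_mul_left]; congr 1; funext i; rw [mul_one_div]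
        _ ≤ 20*|k|^3 * (1/((N:ℝ)^2)) := by
            apply mul_le_mul_of_nonneg_left (cube_tsum_le hN0) (by positivity)
        _ = 20*|k|^3/((N:ℝ)^2) := by rw [mul_one_div]
    have hSbound : |(N:ℝ) * S - 1| ≤ 1/(N:ℝ) := by
      rw [abs_le]
      constructor
      · have h1 := sq_tsum_ge hN0
        rw [← hS_def] at h1
        have h2 : (0:ℝ) < (N:ℝ)+1 := by positivity
        have h4 : (N:ℝ)*(1/((N:ℝ)+1)) ≤ (N:ℝ)*S := mul_le_mul_of_nonneg_left h1 hc.le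
        have h5 : (N:ℝ)/((N:ℝ)+1) ≤ (N:ℝ)*S := by rwa [mul_one_div] at h4
        have h6 : 1 - 1/((N:ℝ)+1) = (N:ℝ)/((N:ℝ)+1) := by field_simp; ring
        have h7 : 1/((N:ℝ)+1) ≤ 1/(N:ℝ) := by
          apply one_div_le_one_div_of_le hc; linarith
        rw [neg_le, neg_sub]
        linarith
      · have h1 := sq_tsum_le hN0
        rw [← hS_def] at h1
        have h2 : (N:ℝ) * S ≤ 1 := by
          calc (N:ℝ) * S ≤ (N:ℝ) * (1/(N:ℝ)) := mul_le_mul_of_nonneg_left h1 hc.le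
            _ = 1 := by field_simp
        have h3 : (0:ℝ) < 1/(N:ℝ) := by positivity
        linarith
    rw [Real.norm_eq_abs, hsplit]
    have expand : (N:ℝ) * ((∑' i, D i) + k^2 * S) - k^2
        = (N:ℝ) * (∑' i, D i) + k^2 * ((N:ℝ) * S - 1) := by ring
    rw [expand]
    calc |(N:ℝ) * (∑' i, D i) + k^2 * ((N:ℝ) * S - 1)|
        ≤ |(N:ℝ) * (∑' i, D i)| + |k^2 * ((N:ℝ) * S - 1)| := abs_add_le _ _
      _ ≤ (N:ℝ) * (20*|k|^3/((N:ℝ)^2)) + k^2 * (1/(N:ℝ)) := by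
          rw [abs_mul, abs_mul, abs_of_pos hc, abs_of_nonneg (sq_nonneg k)]
          gcongr
      _ = c / N := by
          rw [hc_def]
          field_simp
          ring
  have h0 : Tendsto (fun N : ℕ => (N:ℝ) * (∑' i : ℕ, ll k (N + i)) - k^2) atTop (𝓝 0) :=
    squeeze_zero_norm' key (tendsto_const_div_atTop_nhds_zero_nat c)
  have := h0.add (tendsto_const_nhds (x := k^2))
  simpa using this

lemma gamma_ratio {k : ℝ} (hk : -1/2 < k) (j : ℕ) :
    Real.Gamma ((j:ℝ)+1) * Real.Gamma ((j:ℝ)+1+2*k) / Real.Gamma ((j:ℝ)+1+k)^2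
      * ∏ n ∈ range j, am k n = Real.Gamma (1+2*k) / Real.Gamma (1+k)^2 := by
  induction j with
  | zero => norm_num [Real.Gamma_one]
  | succ j ih =>
    have hj1 : (0:ℝ) < (j:ℝ)+1 := by positivity
    have hj2 : (0:ℝ) < (j:ℝ)+1+2*k := by nlinarith [Nat.cast_nonneg (α := ℝ) j]
    have hj3 : (0:ℝ) < (j:ℝ)+1+k := by nlinarith [Nat.cast_nonneg (α := ℝ) j]
    have hG3 : (0:ℝ) < Real.Gamma ((j:ℝ)+1+k) := Real.Gamma_pos_of_pos hj3
    have hcast : ((j+1:ℕ):ℝ) = (j:ℝ)+1 := by push_cast; ring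
    rw [Finset.prod_range_succ, hcast]
    have g1 : Real.Gamma ((j:ℝ)+1+1) = ((j:ℝ)+1) * Real.Gamma ((j:ℝ)+1) :=
      Real.Gamma_add_one hj1.ne'
    have g2 : Real.Gamma ((j:ℝ)+1+1+2*k) = ((j:ℝ)+1+2*k) * Real.Gamma ((j:ℝ)+1+2*k) := by
      rw [show (j:ℝ)+1+1+2*k = ((j:ℝ)+1+2*k)+1 from by ring, Real.Gamma_add_one hj2.ne']
    have g3 : Real.Gamma ((j:ℝ)+1+1+k) = ((j:ℝ)+1+k) * Real.Gamma ((j:ℝ)+1+k) := by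
      rw [show (j:ℝ)+1+1+k = ((j:ℝ)+1+k)+1 from by ring, Real.Gamma_add_one hj3.ne']
    rw [g1, g2, g3, am_eq hk j, ← ih]
    field_simp

lemma prod_M_eq {k : ℝ} (hk : -1/2 < k) (N : ℕ) :
    (∏ j ∈ range N,
        Real.Gamma ((j:ℝ)+1) * Real.Gamma ((j:ℝ)+1+2*k) / Real.Gamma ((j:ℝ)+1+k)^2)
      * (∏ n ∈ range N, am k n)^N
    = (∏ n ∈ range N, am k n ^ (n+1)) * (Real.Gamma (1+2*k)/Real.Gamma (1+k)^2)^N := by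
  induction N with
  | zero => simp
  | succ N ih =>
    have h1 := gamma_ratio hk N
    rw [Finset.prod_range_succ, Finset.prod_range_succ, Finset.prod_range_succ]
    set M := ∏ j ∈ range N,
        Real.Gamma ((j:ℝ)+1) * Real.Gamma ((j:ℝ)+1+2*k) / Real.Gamma ((j:ℝ)+1+k)^2
    set P := ∏ n ∈ range N, am k n
    set A := ∏ n ∈ range N, am k n ^ (n+1)
    set C := Real.Gamma (1+2*k)/Real.Gamma (1+k)^2
    set r := Real.Gamma ((N:ℝ)+1) * Real.Gamma ((N:ℝ)+1+2*k) / Real.Gamma ((N:ℝ)+1+k)^2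
    set a := am k N
    linear_combination (r * P * a^(N+1)) * ih + (A * C^N * a^(N+1)) * h1

lemma bb_ratio {k : ℝ} (hk : -1/2 < k) (n : ℕ) :
    bb k n ^ 2 / bb (2*k) n = am k n ^ (n+1) * Real.exp (-(k^2/((n:ℝ)+1))) := by
  have hN : (0:ℝ) < (n:ℝ)+1 := by positivity
  have he : (Real.exp (k^2/(2*((n:ℝ)+1)) - k))^2
      = Real.exp (-(k^2/((n:ℝ)+1))) * Real.exp ((2*k)^2/(2*((n:ℝ)+1)) - 2*k) := by
    rw [sq, ← Real.exp_add, ← Real.exp_add]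
    congr 1
    field_simp
    ring
  have hp : ((1+k/((n:ℝ)+1))^(n+1))^2 = ((1+k/((n:ℝ)+1))^2)^(n+1) := by
    rw [← pow_mul, ← pow_mul, Nat.mul_comm]
  rw [bb, bb, am, mul_pow, hp, he, div_pow, mul_div_mul_comm]
  congr 1
  exact mul_div_cancel_right₀ _ (Real.exp_ne_zero _)

lemma harmonic_cast (N : ℕ) : ((harmonic N : ℚ) : ℝ) = ∑ n ∈ range N, 1/((n:ℝ)+1) := by
  rw [harmonic]
  push_cast
  refine Finset.sum_congr rfl fun n _ => ?_
  rw [one_div]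

end KSaux

open KSaux

/-- For fixed real `k > -1/2`, `M_N(2k) = ∏_{j=1}^N Γ(j)Γ(j+2k)/Γ(j+k)²` satisfies
`M_N(2k) N^{-k²} → G(k+1)²/G(2k+1)` as `N → ∞`. -/
theorem keating_snaith_asymptotics (k : ℝ) (hk : -1/2 < k) :
    Tendsto
      (fun N : ℕ =>
        (∏ j ∈ Finset.range N,
          Real.Gamma (j + 1) * Real.Gamma ((j : ℝ) + 1 + 2 * k) /
            Real.Gamma ((j : ℝ) + 1 + k) ^ 2) * (N : ℝ) ^ (-(k ^ 2)))
      atTop (𝓝 (BarnesG (k + 1) ^ 2 / BarnesG (2 * k + 1))) := by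
  have hk1 : (-1:ℝ) < k := by linarith
  have hk2 : (-1:ℝ) < 2*k := by linarith
  set γ := Real.eulerMascheroniConstant with hγ_def
  set B1 := Real.exp (∑' n, Real.log (bb k n)) with hB1_def
  set B2 := Real.exp (∑' n, Real.log (bb (2*k) n)) with hB2_def
  have hB1 : HasProd (bb k) B1 := hasProd_exp_tsum (bb_pos hk1) (summable_log_bb hk1)
  have hB2 : HasProd (bb (2*k)) B2 := hasProd_exp_tsum (bb_pos hk2) (summable_log_bb hk2)
  have hB2ne : B2 ≠ 0 := Real.exp_ne_zero _
  -- the Barnes G constant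
  have hBG1 : BarnesG (k+1)
      = (2*Real.pi)^(k/2) * Real.exp (-(k + k^2*(1+γ))/2) * B1 := by
    rw [BarnesG, show k+1-1 = k from by ring, ← hB1.tprod_eq]
    rfl
  have hBG2 : BarnesG (2*k+1)
      = (2*Real.pi)^((2*k)/2) * Real.exp (-((2*k) + (2*k)^2*(1+γ))/2) * B2 := by
    rw [BarnesG, show 2*k+1-1 = 2*k from by ring, ← hB2.tprod_eq]
    rfl
  have hπ : (0:ℝ) < 2*Real.pi := by positivity
  have hconst : BarnesG (k+1)^2 / BarnesG (2*k+1)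
      = B1^2/B2 * Real.exp (k^2*γ) * Real.exp (k^2) := by
    rw [hBG1, hBG2, show (2*k)/2 = k from by ring]
    have hpp : ((2*Real.pi)^(k/2))^2 = (2*Real.pi)^k := by
      rw [← Real.rpow_natCast ((2*Real.pi)^(k/2)) 2, ← Real.rpow_mul hπ.le]
      norm_num
    have he12 : (Real.exp (-(k + k^2*(1+γ))/2))^2 = Real.exp (-(k + k^2*(1+γ))) := by
      rw [sq, ← Real.exp_add]
      congr 1
      ring
    have hAB : Real.exp (-(k + k^2*(1+γ)))
        = Real.exp (-((2*k) + (2*k)^2*(1+γ))/2) * (Real.exp (k^2*γ) * Real.exp (k^2)) := by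
      rw [← Real.exp_add, ← Real.exp_add]
      congr 1
      ring
    rw [mul_pow, mul_pow, hpp, he12, hAB]
    have h1 : ((2*Real.pi)^k : ℝ) ≠ 0 := (Real.rpow_pos_of_pos hπ _).ne'
    have h2 : Real.exp (-((2*k) + (2*k)^2*(1+γ))/2) ≠ 0 := Real.exp_ne_zero _
    field_simp
  -- eventual equality
  have heq : ∀ᶠ N : ℕ in atTop,
      ((∏ n ∈ Finset.range N, bb k n)^2 / (∏ n ∈ Finset.range N, bb (2*k) n))
        * Real.exp (k^2 * (((harmonic N : ℚ):ℝ) - Real.log N))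
        * Real.exp ((N:ℝ) * ∑' i, ll k (N + i))
      = (∏ j ∈ Finset.range N,
          Real.Gamma (j + 1) * Real.Gamma ((j : ℝ) + 1 + 2 * k) /
            Real.Gamma ((j : ℝ) + 1 + k) ^ 2) * (N : ℝ) ^ (-(k ^ 2)) := by
    filter_upwards [eventually_gt_atTop 0] with N hN
    have hNpos : (0:ℝ) < N := by exact_mod_cast hN
    have hPpos : (0:ℝ) < ∏ n ∈ Finset.range N, am k n :=
      Finset.prod_pos fun n _ => am_pos hk n
    set P := ∏ n ∈ Finset.range N, am k n with hP_def
    set A' := ∏ n ∈ Finset.range N, am k n ^ (n+1) with hA'_def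
    set C := Real.Gamma (1+2*k)/Real.Gamma (1+k)^2 with hC_def
    set M := ∏ j ∈ Finset.range N,
        Real.Gamma ((j:ℝ) + 1) * Real.Gamma ((j : ℝ) + 1 + 2 * k) /
          Real.Gamma ((j : ℝ) + 1 + k) ^ 2 with hM_def
    have hM : M = A' * (C^N / P^N) := by
      have hPn : P^N ≠ 0 := pow_ne_zero _ hPpos.ne'
      rw [← mul_div_assoc, eq_div_iff hPn]
      exact prod_M_eq hk N
    have hPexp : P = Real.exp (∑ n ∈ Finset.range N, ll k n) := by
      rw [Real.exp_sum]
      exact Finset.prod_congr rfl fun n _ => (Real.exp_log (am_pos hk n)).symm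
    have hsplit : (∑ n ∈ Finset.range N, ll k n) + ∑' i, ll k (N + i) = ∑' n, ll k n := by
      rw [← Summable.sum_add_tsum_nat_add N (summable_ll k)]
      congr 1
      exact tsum_congr fun i => by rw [Nat.add_comm]
    have hCP : C^N / P^N = Real.exp ((N:ℝ) * ∑' i, ll k (N + i)) := by
      rw [hC_def, C_eq hk, hPexp, ← Real.exp_nat_mul, ← Real.exp_nat_mul, ← Real.exp_sub]
      congr 1
      have : (∑' i, ll k (N + i)) = (∑' n, ll k n) - ∑ n ∈ Finset.range N, ll k n := by
        rw [← hsplit]; ring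
      rw [this]
      ring
    have hA : (∏ n ∈ Finset.range N, bb k n)^2 / (∏ n ∈ Finset.range N, bb (2*k) n)
        = A' * Real.exp (-(k^2) * ((harmonic N : ℚ):ℝ)) := by
      rw [← Finset.prod_pow, ← Finset.prod_div_distrib]
      rw [harmonic_cast, Finset.mul_sum, Real.exp_sum, hA'_def, ← Finset.prod_mul_distrib]
      refine Finset.prod_congr rfl fun n _ => ?_
      rw [bb_ratio hk n]
      congr 1
      rw [mul_one_div]
      ring_nf
    have hrpow : (N:ℝ) ^ (-(k^2)) = Real.exp (Real.log N * -(k^2)) :=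
      Real.rpow_def_of_pos hNpos _
    rw [hA, hM, hCP, hrpow]
    rw [mul_assoc, mul_assoc, mul_assoc, ← Real.exp_add, ← Real.exp_add, ← Real.exp_add]
    congr 2
    ring
  -- limits
  have hlim1 : Tendsto (fun N : ℕ =>
      (∏ n ∈ Finset.range N, bb k n)^2 / (∏ n ∈ Finset.range N, bb (2*k) n)) atTop
      (𝓝 (B1^2/B2)) :=
    (hB1.tendsto_prod_nat.pow 2).div hB2.tendsto_prod_nat hB2ne
  have hlim2 : Tendsto (fun N : ℕ =>
      Real.exp (k^2 * (((harmonic N : ℚ):ℝ) - Real.log N))) atTop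
      (𝓝 (Real.exp (k^2*γ))) :=
    (Real.tendsto_harmonic_sub_log.const_mul (k^2)).rexp
  have hlim3 : Tendsto (fun N : ℕ =>
      Real.exp ((N:ℝ) * ∑' i, ll k (N + i))) atTop (𝓝 (Real.exp (k^2))) :=
    (tendsto_tail k).rexp
  rw [hconst]
  exact Tendsto.congr' heq ((hlim1.mul hlim2).mul hlim3)
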